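/- Fix p ≥ 1 and block sizes n : Fin p → ℕ with n k ≥ 1, and set ι := Σ k, Fin (n k). Let u : ℝ → M_ι(ℂ) be differentiable at t₀ with u(t) unitary for all t ∈ ℝ, let λ : ℝ → (Fin p → ℝ) be differentiable at t₀, set h(t) := blockDiagonal'(fun k => (λ(t) k : ℂ) • 1_{n k}) and H(t) := u(t) · h(t) · u(t)†. Let ρ ∈ M_ι(ℂ) be a density matrix, let G := ∏_k U(n k) with Haar probability measure μ, and for V ∈ G set W(V) := u(t₀) · blockDiagonal' V · u(t₀)†. Then ∫_G trace( W(V) · ρ · W(V)† · H'(t₀) ) dμ(V) = trace( ρ · u(t₀) · h'(t₀) · u(t₀)† ), where H'(t₀) and h'(t₀) denote the derivatives at t₀. -/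

import Mathlib

open MeasureTheory Matrix ComplexOrder

attribute [local instance] Matrix.normedAddCommGroup Matrix.normedSpace

noncomputable instance (m : ℕ) : MeasurableSpace (Matrix.unitaryGroup (Fin m) ℂ) := borel _
instance (m : ℕ) : BorelSpace (Matrix.unitaryGroup (Fin m) ℂ) := ⟨rfl⟩

instance unitaryGroup_secondCountable (m : ℕ) :
    SecondCountableTopology (Matrix.unitaryGroup (Fin m) ℂ) := by
  haveI : SecondCountableTopology (Matrix (Fin m) (Fin m) ℂ) :=
    inferInstanceAs (SecondCountableTopology (Fin m → Fin m → ℂ))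
  exact TopologicalSpace.Subtype.secondCountableTopology
    (Matrix.unitaryGroup (Fin m) ℂ : Set (Matrix (Fin m) (Fin m) ℂ))

-- entry bound
lemma unitary_entry_norm_le {m : ℕ} {A : Matrix (Fin m) (Fin m) ℂ}
    (hA : A ∈ Matrix.unitaryGroup (Fin m) ℂ) (i j : Fin m) : ‖A i j‖ ≤ 1 := by
  have h1 : (A * star A) i i = 1 := by rw [hA.2]; simp [Matrix.one_apply]
  have h2 : ∑ k, Complex.normSq (A i k) = 1 := by
    have := h1
    rw [Matrix.mul_apply] at this
    have : ∑ k, ((Complex.normSq (A i k) : ℂ)) = 1 := by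
      rw [← this]
      refine Finset.sum_congr rfl fun k _ => ?_
      rw [Matrix.star_apply]
      exact (Complex.mul_conj (A i k)).symm
    exact_mod_cast this
  have h3 : Complex.normSq (A i j) ≤ 1 := by
    rw [← h2]
    exact Finset.single_le_sum (fun k _ => Complex.normSq_nonneg _) (Finset.mem_univ j)
  have h4 : ‖A i j‖ ^ 2 ≤ 1 := by rwa [← Complex.sq_norm] at h3
  nlinarith [norm_nonneg (A i j)]

instance unitaryGroup_compactSpace (m : ℕ) : CompactSpace (Matrix.unitaryGroup (Fin m) ℂ) := by
  suffices h : IsCompact ((Matrix.unitaryGroup (Fin m) ℂ : Set (Matrix (Fin m) (Fin m) ℂ))) from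
    isCompact_iff_compactSpace.mp h
  have hclosed : IsClosed ((Matrix.unitaryGroup (Fin m) ℂ : Set (Matrix (Fin m) (Fin m) ℂ))) := by
    have : (Matrix.unitaryGroup (Fin m) ℂ : Set (Matrix (Fin m) (Fin m) ℂ)) =
        (fun A : Matrix (Fin m) (Fin m) ℂ => (star A * A, A * star A)) ⁻¹' {(1, 1)} := by
      ext A
      simp only [Set.mem_preimage, Set.mem_singleton_iff, Prod.mk.injEq]
      exact ⟨fun h => ⟨h.1, h.2⟩, fun h => ⟨h.1, h.2⟩⟩
    rw [this]
    exact IsClosed.preimage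
      (Continuous.prodMk (continuous_id.matrix_conjTranspose.matrix_mul continuous_id)
        (continuous_id.matrix_mul continuous_id.matrix_conjTranspose)) isClosed_singleton
  have hsub : (Matrix.unitaryGroup (Fin m) ℂ : Set (Matrix (Fin m) (Fin m) ℂ)) ⊆
      Set.pi Set.univ (fun _ : Fin m => Set.pi Set.univ
        (fun _ : Fin m => Metric.closedBall (0 : ℂ) 1)) := by
    intro A hA
    intro i _ 
    intro j _
    simpa [Complex.dist_eq] using unitary_entry_norm_le hA i j
  exact IsCompact.of_isClosed_subset
    (isCompact_univ_pi fun _ => isCompact_univ_pi fun _ => isCompact_closedBall 0 1)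
    hclosed hsub
section Calc

variable {ι : Type*} [Fintype ι] [DecidableEq ι]

lemma hasDerivAt_matrix {f : ℝ → Matrix ι ι ℂ} {f' : Matrix ι ι ℂ} {t : ℝ} :
    HasDerivAt f f' t ↔ ∀ i j, HasDerivAt (fun s => f s i j) (f' i j) t := by
  exact hasDerivAt_pi.trans (forall_congr' fun i => hasDerivAt_pi)

lemma HasDerivAt.matrix_mul {f g : ℝ → Matrix ι ι ℂ} {f' g' : Matrix ι ι ℂ} {t : ℝ}
    (hf : HasDerivAt f f' t) (hg : HasDerivAt g g' t) :
    HasDerivAt (fun s => f s * g s) (f' * g t + f t * g') t := by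
  rw [hasDerivAt_matrix] at hf hg ⊢
  intro i j
  have : HasDerivAt (fun s => ∑ m, f s i m * g s m j)
      (∑ m, (f' i m * g t m j + f t i m * g' m j)) t :=
    HasDerivAt.fun_sum fun m _ => (hf i m).mul (hg m j)
  simpa [Matrix.mul_apply, Matrix.add_apply, Finset.sum_add_distrib] using this

lemma HasDerivAt.matrix_star {f : ℝ → Matrix ι ι ℂ} {f' : Matrix ι ι ℂ} {t : ℝ}
    (hf : HasDerivAt f f' t) :
    HasDerivAt (fun s => star (f s)) (star f') t := by
  rw [hasDerivAt_matrix] at hf ⊢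
  intro i j
  simpa [Matrix.star_apply] using (hf j i).star

end Calc

section BD

variable {p : ℕ} {n : Fin p → ℕ}

lemma bd_smul_one_eq_diagonal (c : Fin p → ℂ) :
    Matrix.blockDiagonal' (fun k => (c k) • (1 : Matrix (Fin (n k)) (Fin (n k)) ℂ))
      = Matrix.diagonal (fun i : Σ k, Fin (n k) => c i.1) := by
  have : ∀ k, (c k) • (1 : Matrix (Fin (n k)) (Fin (n k)) ℂ)
      = Matrix.diagonal (fun _ => c k) := by
    intro k
    ext a b
    by_cases hab : a = b <;> simp [Matrix.one_apply, Matrix.diagonal_apply, hab]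
  simp_rw [this]
  exact Matrix.blockDiagonal'_diagonal _

lemma hasDerivAt_bd {lam : ℝ → Fin p → ℝ} {lam' : Fin p → ℝ} {t : ℝ}
    (hlam : HasDerivAt lam lam' t) :
    HasDerivAt (fun s => Matrix.blockDiagonal'
        (fun k => ((lam s k : ℂ)) • (1 : Matrix (Fin (n k)) (Fin (n k)) ℂ)))
      (Matrix.diagonal (fun i : Σ k, Fin (n k) => (lam' i.1 : ℂ))) t := by
  simp_rw [bd_smul_one_eq_diagonal]
  rw [hasDerivAt_matrix]
  intro i j
  rcases eq_or_ne i j with rfl | hij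
  · simp only [Matrix.diagonal_apply_eq]
    have h1 : HasDerivAt (fun s => lam s i.1) (lam' i.1) t := hasDerivAt_pi.mp hlam i.1
    exact Complex.ofRealCLM.hasFDerivAt.comp_hasDerivAt t h1
  · simp only [Matrix.diagonal_apply_ne _ hij]
    exact hasDerivAt_const t 0

end BD
set_option maxHeartbeats 1000000

section Haar

variable {p : ℕ} {n : Fin p → ℕ}

/-- block diagonal of a tuple of unitaries -/
noncomputable def bdu (V : ∀ k : Fin p, Matrix.unitaryGroup (Fin (n k)) ℂ) : Matrix (Σ k : Fin p, Fin (n k)) (Σ k : Fin p, Fin (n k)) ℂ :=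
  Matrix.blockDiagonal' (fun k => (V k : Matrix (Fin (n k)) (Fin (n k)) ℂ))

lemma bdu_mul (U V : ∀ k : Fin p, Matrix.unitaryGroup (Fin (n k)) ℂ) : bdu (U * V) = bdu U * bdu V := by
  unfold bdu
  rw [← Matrix.blockDiagonal'_mul]
  rfl

lemma star_bdu_mul_bdu (V : ∀ k : Fin p, Matrix.unitaryGroup (Fin (n k)) ℂ) : star (bdu V) * bdu V = 1 := by
  unfold bdu
  show (Matrix.blockDiagonal' _)ᴴ * _ = _
  rw [Matrix.blockDiagonal'_conjTranspose, ← Matrix.blockDiagonal'_mul]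
  have : (fun k => ((V k : Matrix (Fin (n k)) (Fin (n k)) ℂ))ᴴ * (V k : Matrix (Fin (n k)) (Fin (n k)) ℂ))
      = fun k => (1 : Matrix (Fin (n k)) (Fin (n k)) ℂ) := by
    funext k
    exact (V k).2.1
  rw [this]
  exact Matrix.blockDiagonal'_one

lemma continuous_bdu : Continuous (bdu (p := p) (n := n)) := by
  apply Continuous.matrix_blockDiagonal'
  exact continuous_pi fun k => ((continuous_apply k).subtype_val)

/-- the diagonal sign unitary supported at i₀ -/
noncomputable def signU (i₀ : (Σ k : Fin p, Fin (n k))) : ∀ k : Fin p, Matrix.unitaryGroup (Fin (n k)) ℂ := fun k =>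
  ⟨Matrix.diagonal (fun a => if (⟨k, a⟩ : (Σ k : Fin p, Fin (n k))) = i₀ then (-1 : ℂ) else 1), by
    constructor <;>
    · show _ = (1 : Matrix (Fin (n k)) (Fin (n k)) ℂ)
      rw [show (star (Matrix.diagonal (fun a => if (⟨k, a⟩ : (Σ k : Fin p, Fin (n k))) = i₀ then (-1 : ℂ) else 1)))
          = Matrix.diagonal (star fun a => if (⟨k, a⟩ : (Σ k : Fin p, Fin (n k))) = i₀ then (-1 : ℂ) else 1) from
        Matrix.diagonal_conjTranspose _]
      rw [Matrix.diagonal_mul_diagonal]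
      ext a b
      rcases eq_or_ne a b with rfl | hab
      · rcases eq_or_ne (⟨k, a⟩ : (Σ k : Fin p, Fin (n k))) i₀ with h | h <;>
          simp [Matrix.diagonal_apply, Matrix.one_apply, h]
      · simp [Matrix.diagonal_apply_ne _ hab, Matrix.one_apply_ne hab]⟩

lemma bdu_signU (i₀ : (Σ k : Fin p, Fin (n k))) :
    bdu (signU i₀) = Matrix.diagonal (fun i : (Σ k : Fin p, Fin (n k)) => if i = i₀ then (-1 : ℂ) else 1) := by
  unfold bdu signU
  rw [Matrix.blockDiagonal'_diagonal]

lemma integral_trace_bdu_conj_eq_zero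
    (μ : Measure (∀ k : Fin p, Matrix.unitaryGroup (Fin (n k)) ℂ)) [μ.IsHaarMeasure] [IsProbabilityMeasure μ]
    (B M : Matrix (Σ k : Fin p, Fin (n k)) (Σ k : Fin p, Fin (n k)) ℂ) (hM : ∀ i, M i i = 0) :
    ∫ V : ∀ k : Fin p, Matrix.unitaryGroup (Fin (n k)) ℂ, Matrix.trace (bdu V * B * star (bdu V) * M) ∂μ = 0 := by
  classical
  -- continuity of entries
  have hFc : Continuous fun V : (∀ k : Fin p, Matrix.unitaryGroup (Fin (n k)) ℂ) => bdu V * B * star (bdu V) := by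
    exact (continuous_bdu.matrix_mul continuous_const).matrix_mul
      continuous_bdu.matrix_conjTranspose
  have hent : ∀ i j : (Σ k : Fin p, Fin (n k)), Continuous fun V : (∀ k : Fin p, Matrix.unitaryGroup (Fin (n k)) ℂ) => (bdu V * B * star (bdu V)) i j :=
    fun i j => hFc.matrix_elem i j
  have hint : ∀ (f : (∀ k : Fin p, Matrix.unitaryGroup (Fin (n k)) ℂ) → ℂ), Continuous f → Integrable f μ := by
    intro f hf
    apply hf.integrable_of_hasCompactSupport
    exact HasCompactSupport.of_compactSpace f
  -- the averaged matrix
  set T : Matrix (Σ k : Fin p, Fin (n k)) (Σ k : Fin p, Fin (n k)) ℂ :=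
    Matrix.of (fun i j => ∫ V : ∀ k : Fin p, Matrix.unitaryGroup (Fin (n k)) ℂ, (bdu V * B * star (bdu V)) i j ∂μ) with hT
  -- commutation with blockdiagonal unitaries
  have hcomm : ∀ U : ∀ k : Fin p, Matrix.unitaryGroup (Fin (n k)) ℂ, bdu U * T = T * bdu U := by
    intro U
    have halg : ∀ V : ∀ k : Fin p, Matrix.unitaryGroup (Fin (n k)) ℂ, bdu U * (bdu V * B * star (bdu V))
        = (bdu (U * V) * B * star (bdu (U * V))) * bdu U := by
      intro V
      rw [bdu_mul, StarMul.star_mul]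
      calc bdu U * (bdu V * B * star (bdu V))
          = bdu U * bdu V * B * (star (bdu V) * (star (bdu U) * bdu U)) := by
            rw [star_bdu_mul_bdu U, mul_one]
            simp only [mul_assoc]
        _ = bdu U * bdu V * B * (star (bdu V) * star (bdu U)) * bdu U := by
            simp only [mul_assoc]
    ext i j
    have lhs_eq : (bdu U * T) i j = ∫ V : ∀ k : Fin p, Matrix.unitaryGroup (Fin (n k)) ℂ, (bdu U * (bdu V * B * star (bdu V))) i j ∂μ := by
      calc (bdu U * T) i j
          = ∑ m, bdu U i m * ∫ V : ∀ k : Fin p, Matrix.unitaryGroup (Fin (n k)) ℂ, (bdu V * B * star (bdu V)) m j ∂μ := by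
            rw [Matrix.mul_apply]; rfl
        _ = ∑ m, ∫ V : ∀ k : Fin p, Matrix.unitaryGroup (Fin (n k)) ℂ, bdu U i m * (bdu V * B * star (bdu V)) m j ∂μ :=
            Finset.sum_congr rfl fun m _ => (integral_const_mul _ _).symm
        _ = ∫ V : ∀ k : Fin p, Matrix.unitaryGroup (Fin (n k)) ℂ, ∑ m, bdu U i m * (bdu V * B * star (bdu V)) m j ∂μ :=
            (integral_finset_sum _ fun m _ => (hint _ (hent m j)).const_mul _).symm
        _ = ∫ V : ∀ k : Fin p, Matrix.unitaryGroup (Fin (n k)) ℂ, (bdu U * (bdu V * B * star (bdu V))) i j ∂μ := by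
            simp_rw [Matrix.mul_apply]
    have rhs_eq : (T * bdu U) i j = ∫ V : ∀ k : Fin p, Matrix.unitaryGroup (Fin (n k)) ℂ, ((bdu V * B * star (bdu V)) * bdu U) i j ∂μ := by
      calc (T * bdu U) i j
          = ∑ m, (∫ V : ∀ k : Fin p, Matrix.unitaryGroup (Fin (n k)) ℂ, (bdu V * B * star (bdu V)) i m ∂μ) * bdu U m j := by
            rw [Matrix.mul_apply]; rfl
        _ = ∑ m, ∫ V : ∀ k : Fin p, Matrix.unitaryGroup (Fin (n k)) ℂ, (bdu V * B * star (bdu V)) i m * bdu U m j ∂μ :=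
            Finset.sum_congr rfl fun m _ => (integral_mul_const _ _).symm
        _ = ∫ V : ∀ k : Fin p, Matrix.unitaryGroup (Fin (n k)) ℂ, ∑ m, (bdu V * B * star (bdu V)) i m * bdu U m j ∂μ :=
            (integral_finset_sum _ fun m _ => (hint _ (hent i m)).mul_const _).symm
        _ = ∫ V : ∀ k : Fin p, Matrix.unitaryGroup (Fin (n k)) ℂ, ((bdu V * B * star (bdu V)) * bdu U) i j ∂μ := by
            simp_rw [Matrix.mul_apply]
    rw [lhs_eq, rhs_eq]
    have : ∀ V : ∀ k : Fin p, Matrix.unitaryGroup (Fin (n k)) ℂ, (bdu U * (bdu V * B * star (bdu V))) i j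
        = ((bdu (U * V) * B * star (bdu (U * V))) * bdu U) i j := fun V => by rw [halg V]
    simp_rw [this]
    exact integral_mul_left_eq_self (fun V : (∀ k : Fin p, Matrix.unitaryGroup (Fin (n k)) ℂ) => ((bdu V * B * star (bdu V)) * bdu U) i j) U
  -- T is diagonal
  have hTdiag : ∀ i j : (Σ k : Fin p, Fin (n k)), i ≠ j → T i j = 0 := by
    intro i j hij
    have := hcomm (signU i)
    rw [bdu_signU] at this
    have h2 := congrFun (congrFun this i) j
    rw [Matrix.diagonal_mul, Matrix.mul_diagonal] at h2
    simp only [if_pos rfl, if_neg (Ne.symm hij)] at h2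
    -- h2 : -1 * T i j = T i j * 1
    have : (-1 : ℂ) * T i j = T i j * 1 := h2
    rw [mul_one] at this
    have h3 : (2 : ℂ) * T i j = 0 := by ring_nf; linear_combination -this
    have h4 := mul_eq_zero.mp h3
    rcases h4 with h | h
    · norm_num at h
    · exact h
  -- final computation
  have expand : ∀ V : ∀ k : Fin p, Matrix.unitaryGroup (Fin (n k)) ℂ, Matrix.trace (bdu V * B * star (bdu V) * M)
      = ∑ i : (Σ k : Fin p, Fin (n k)), ∑ j : (Σ k : Fin p, Fin (n k)), (bdu V * B * star (bdu V)) i j * M j i := by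
    intro V
    simp only [Matrix.trace, Matrix.diag_apply, Matrix.mul_apply]
  simp_rw [expand]
  rw [integral_finset_sum]
  swap
  · intro i _
    apply integrable_finset_sum
    intro j _
    exact (hint _ (hent i j)).mul_const _
  apply Finset.sum_eq_zero
  intro i _
  rw [integral_finset_sum]
  swap
  · intro j _
    exact (hint _ (hent i j)).mul_const _
  apply Finset.sum_eq_zero
  intro j _
  rw [integral_mul_const]
  rcases eq_or_ne i j with rfl | hij
  · rw [hM i, mul_zero]
  · have : (∫ V : ∀ k : Fin p, Matrix.unitaryGroup (Fin (n k)) ℂ, (bdu V * B * star (bdu V)) i j ∂μ) = T i j := rfl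
    rw [this, hTdiag i j hij, zero_mul]

end Haar
section Main

variable {p : ℕ} {n : Fin p → ℕ}

lemma diag_comm_bd (c : Fin p → ℂ) (Ms : ∀ k, Matrix (Fin (n k)) (Fin (n k)) ℂ) :
    Matrix.diagonal (fun i : Σ k : Fin p, Fin (n k) => c i.1) * Matrix.blockDiagonal' Ms
      = Matrix.blockDiagonal' Ms * Matrix.diagonal (fun i : Σ k : Fin p, Fin (n k) => c i.1) := by
  rw [← bd_smul_one_eq_diagonal, ← Matrix.blockDiagonal'_mul, ← Matrix.blockDiagonal'_mul]
  have : (fun k => (c k • 1 : Matrix (Fin (n k)) (Fin (n k)) ℂ) * Ms k)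
      = fun k => Ms k * (c k • 1) := by
    funext k
    rw [smul_mul_assoc, mul_smul_comm, one_mul, mul_one]
  rw [this]

lemma bdu_mul_star (V : ∀ k : Fin p, Matrix.unitaryGroup (Fin (n k)) ℂ) :
    bdu V * star (bdu V) = 1 := by
  unfold bdu
  show _ * (Matrix.blockDiagonal' _)ᴴ = _
  rw [Matrix.blockDiagonal'_conjTranspose, ← Matrix.blockDiagonal'_mul]
  have : (fun k => (V k : Matrix (Fin (n k)) (Fin (n k)) ℂ) * ((V k : Matrix (Fin (n k)) (Fin (n k)) ℂ))ᴴ)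
      = fun k => (1 : Matrix (Fin (n k)) (Fin (n k)) ℂ) := by
    funext k
    exact (V k).2.2
  rw [this]
  exact Matrix.blockDiagonal'_one

end Main


/-- **integrand of Theorem 1.** Let `H(t) = u(t) h(t) u(t)†` with
`h(t) = ⊕ₖ λₖ(t) 1_{n k}`, where `u` is a differentiable family of unitaries and `λ` is
differentiable at `t₀`.  Then the Haar average over the thermodynamic gauge group
`𝒢_T = ∏ₖ U(n k)` of the instantaneous power `Tr{W ρ W† H'(t₀)}` (with `W = u(t₀) V u(t₀)†`)
equals `Tr{ρ u(t₀) h'(t₀) u(t₀)†}`. -/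
theorem haar_average_power_eq_invariant_work_integrand (p : ℕ) (hp : 1 ≤ p)
    (n : Fin p → ℕ) (hn : ∀ k, 1 ≤ n k)
    (u : ℝ → Matrix (Σ k, Fin (n k)) (Σ k, Fin (n k)) ℂ)
    (hu_unitary : ∀ t : ℝ, u t ∈ Matrix.unitaryGroup (Σ k, Fin (n k)) ℂ)
    (t₀ : ℝ) (u' : Matrix (Σ k, Fin (n k)) (Σ k, Fin (n k)) ℂ) (hu : HasDerivAt u u' t₀)
    (lam : ℝ → Fin p → ℝ) (lam' : Fin p → ℝ) (hlam : HasDerivAt lam lam' t₀)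
    (h' : Matrix (Σ k, Fin (n k)) (Σ k, Fin (n k)) ℂ)
    (hh : HasDerivAt
      (fun t : ℝ => Matrix.blockDiagonal'
        (fun k => (lam t k : ℂ) • (1 : Matrix (Fin (n k)) (Fin (n k)) ℂ))) h' t₀)
    (H' : Matrix (Σ k, Fin (n k)) (Σ k, Fin (n k)) ℂ)
    (hH : HasDerivAt
      (fun t : ℝ => u t * Matrix.blockDiagonal'
        (fun k => (lam t k : ℂ) • (1 : Matrix (Fin (n k)) (Fin (n k)) ℂ)) * star (u t)) H' t₀)
    (ρ : Matrix (Σ k, Fin (n k)) (Σ k, Fin (n k)) ℂ) (hρ : ρ.PosSemidef) (hρ_tr : ρ.trace = 1)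
    (μ : Measure (∀ k, Matrix.unitaryGroup (Fin (n k)) ℂ))
    [μ.IsHaarMeasure] [IsProbabilityMeasure μ] :
    (∫ V : ∀ k, Matrix.unitaryGroup (Fin (n k)) ℂ,
        Matrix.trace
          ((u t₀ * Matrix.blockDiagonal'
              (fun k => (V k : Matrix (Fin (n k)) (Fin (n k)) ℂ)) * star (u t₀)) * ρ *
            star (u t₀ * Matrix.blockDiagonal'
              (fun k => (V k : Matrix (Fin (n k)) (Fin (n k)) ℂ)) * star (u t₀)) * H') ∂μ)
      = Matrix.trace (ρ * (u t₀ * h' * star (u t₀))) := by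
  classical
  set v : Matrix (Σ k, Fin (n k)) (Σ k, Fin (n k)) ℂ := u t₀ with hvdef
  have hv1 : star v * v = 1 := (hu_unitary t₀).1
  have hv2 : v * star v = 1 := (hu_unitary t₀).2
  set d : (Σ k, Fin (n k)) → ℂ := fun i => (lam t₀ i.1 : ℂ) with hd
  set h₀ : Matrix (Σ k, Fin (n k)) (Σ k, Fin (n k)) ℂ := Matrix.diagonal d with hh₀
  -- h(t₀) equals the diagonal matrix
  have hbd_eq : ∀ t : ℝ, Matrix.blockDiagonal'
      (fun k => (lam t k : ℂ) • (1 : Matrix (Fin (n k)) (Fin (n k)) ℂ))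
      = Matrix.diagonal (fun i : Σ k, Fin (n k) => (lam t i.1 : ℂ)) :=
    fun t => bd_smul_one_eq_diagonal _
  -- derivative of h
  have hval : h' = Matrix.diagonal (fun i : Σ k, Fin (n k) => (lam' i.1 : ℂ)) :=
    hh.unique (hasDerivAt_bd hlam)
  -- derivative of star u
  have hsu : HasDerivAt (fun t => star (u t)) (star u') t₀ := hu.matrix_star
  -- skew-adjointness
  have hskew : star u' * v + star v * u' = 0 := by
    have hconst : HasDerivAt (fun t => star (u t) * u t) (star u' * u t₀ + star (u t₀) * u') t₀ :=
      hsu.matrix_mul hu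
    have heq : (fun t => star (u t) * u t)
        = fun _ : ℝ => (1 : Matrix (Σ k, Fin (n k)) (Σ k, Fin (n k)) ℂ) :=
      funext fun t => (hu_unitary t).1
    rw [heq] at hconst
    exact hconst.unique (hasDerivAt_const t₀ 1)
  -- decomposition of H'
  have hH'eq : H' = u' * h₀ * star v + v * h' * star v + v * h₀ * star u' := by
    have hprod : HasDerivAt
        (fun t : ℝ => u t * Matrix.blockDiagonal'
          (fun k => (lam t k : ℂ) • (1 : Matrix (Fin (n k)) (Fin (n k)) ℂ)) * star (u t))
        ((u' * Matrix.blockDiagonal'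
            (fun k => (lam t₀ k : ℂ) • (1 : Matrix (Fin (n k)) (Fin (n k)) ℂ)) + u t₀ * h')
          * star (u t₀)
          + (u t₀ * Matrix.blockDiagonal'
            (fun k => (lam t₀ k : ℂ) • (1 : Matrix (Fin (n k)) (Fin (n k)) ℂ))) * star u') t₀ :=
      (hu.matrix_mul hh).matrix_mul hsu
    have := hH.unique hprod
    rw [this, hbd_eq t₀]
    rw [← hvdef, ← hd, ← hh₀]
    rw [add_mul]
  -- the B and M matrices
  set B : Matrix (Σ k, Fin (n k)) (Σ k, Fin (n k)) ℂ := star v * ρ * v with hB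
  set M : Matrix (Σ k, Fin (n k)) (Σ k, Fin (n k)) ℂ :=
    star v * u' * h₀ + h₀ * (star u' * v) with hM
  have hMdiag : ∀ i, M i i = 0 := by
    intro i
    have hz := congrFun (congrFun hskew i) i
    simp only [Matrix.add_apply, Matrix.zero_apply] at hz
    have : M i i = (star v * u') i i * d i + d i * (star u' * v) i i := by
      rw [hM, Matrix.add_apply, hh₀, Matrix.mul_diagonal, Matrix.diagonal_mul]
    rw [this]
    have hz' : (star u' * v) i i + (star v * u') i i = 0 := hz
    ring_nf
    linear_combination d i * hz'
  -- cancellation helpers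
  have cancelv1 : ∀ A : Matrix (Σ k, Fin (n k)) (Σ k, Fin (n k)) ℂ, star v * (v * A) = A :=
    fun A => by rw [← mul_assoc, hv1, one_mul]
  have cancelv2 : ∀ A : Matrix (Σ k, Fin (n k)) (Σ k, Fin (n k)) ℂ, v * (star v * A) = A :=
    fun A => by rw [← mul_assoc, hv2, one_mul]
  -- pointwise identity
  have key : ∀ V : ∀ k, Matrix.unitaryGroup (Fin (n k)) ℂ,
      Matrix.trace
        ((v * Matrix.blockDiagonal' (fun k => (V k : Matrix (Fin (n k)) (Fin (n k)) ℂ)) * star v)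
          * ρ *
          star (v * Matrix.blockDiagonal' (fun k => (V k : Matrix (Fin (n k)) (Fin (n k)) ℂ))
            * star v) * H')
        = Matrix.trace (bdu V * B * star (bdu V) * M)
          + Matrix.trace (ρ * (v * h' * star v)) := by
    intro V
    have hXdef : Matrix.blockDiagonal' (fun k => (V k : Matrix (Fin (n k)) (Fin (n k)) ℂ))
        = bdu V := rfl
    rw [hXdef]
    set X : Matrix (Σ k, Fin (n k)) (Σ k, Fin (n k)) ℂ := bdu V with hXX
    have hX1 : star X * X = 1 := star_bdu_mul_bdu V
    have hX2 : X * star X = 1 := bdu_mul_star V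
    have cancelX1 : ∀ A : Matrix (Σ k, Fin (n k)) (Σ k, Fin (n k)) ℂ, star X * (X * A) = A :=
      fun A => by rw [← mul_assoc, hX1, one_mul]
    have cancelX2 : ∀ A : Matrix (Σ k, Fin (n k)) (Σ k, Fin (n k)) ℂ, X * (star X * A) = A :=
      fun A => by rw [← mul_assoc, hX2, one_mul]
    have hsW : star (v * X * star v) = v * star X * star v := by
      simp only [StarMul.star_mul, star_star, mul_assoc]
    rw [hsW, hH'eq]
    -- expand the product over the three terms of H'
    rw [mul_add, mul_add, Matrix.trace_add, Matrix.trace_add]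
    -- commutation of h₀ and h' with X and star X
    have hcomm'X : Matrix.diagonal (fun i : Σ k, Fin (n k) => (lam' i.1 : ℂ)) * star X
        = star X * Matrix.diagonal (fun i : Σ k, Fin (n k) => (lam' i.1 : ℂ)) := by
      rw [hXX]
      unfold bdu
      rw [show (star (Matrix.blockDiagonal' fun k => (V k : Matrix (Fin (n k)) (Fin (n k)) ℂ)))
          = Matrix.blockDiagonal' fun k => ((V k : Matrix (Fin (n k)) (Fin (n k)) ℂ))ᴴ from
        Matrix.blockDiagonal'_conjTranspose _]
      exact diag_comm_bd (fun k => (lam' k : ℂ))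
        (fun k => ((V k : Matrix (Fin (n k)) (Fin (n k)) ℂ))ᴴ)
    -- term 2
    have t2 : Matrix.trace ((v * X * star v) * ρ * (v * star X * star v) * (v * h' * star v))
        = Matrix.trace (ρ * (v * h' * star v)) := by
      have e1 : (v * X * star v) * ρ * (v * star X * star v) * (v * h' * star v)
          = v * (X * (B * (star X * h'))) * star v := by
        rw [hB]
        simp only [mul_assoc, cancelv1, cancelv2]
      rw [e1]
      rw [hval, ← hcomm'X, ← hval]
      calc Matrix.trace (v * (X * (B * (h' * star X))) * star v)
          = Matrix.trace (star v * (v * (X * (B * (h' * star X))))) := by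
            rw [Matrix.trace_mul_comm]
        _ = Matrix.trace (X * (B * (h' * star X))) := by rw [cancelv1]
        _ = Matrix.trace ((B * (h' * star X)) * X) := Matrix.trace_mul_comm _ _
        _ = Matrix.trace (B * h') := by
            simp only [mul_assoc, hX1, mul_one]
        _ = Matrix.trace (star v * (ρ * (v * h'))) := by
            rw [hB]; simp only [mul_assoc]
        _ = Matrix.trace ((ρ * (v * h')) * star v) := Matrix.trace_mul_comm _ _
        _ = Matrix.trace (ρ * (v * h' * star v)) := by simp only [mul_assoc]
    -- term 1
    have t1 : Matrix.trace ((v * X * star v) * ρ * (v * star X * star v) * (u' * h₀ * star v))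
        = Matrix.trace (X * B * star X * (star v * u' * h₀)) := by
      have e1 : (v * X * star v) * ρ * (v * star X * star v) * (u' * h₀ * star v)
          = v * (X * (B * (star X * (star v * (u' * (h₀ * star v)))))) := by
        rw [hB]
        simp only [mul_assoc, cancelv1, cancelv2]
      rw [e1, Matrix.trace_mul_comm]
      congr 1
      simp only [mul_assoc, cancelv1, hv1, mul_one]
    -- term 3
    have t3 : Matrix.trace ((v * X * star v) * ρ * (v * star X * star v) * (v * h₀ * star u'))
        = Matrix.trace (X * B * star X * (h₀ * (star u' * v))) := by
      have e1 : (v * X * star v) * ρ * (v * star X * star v) * (v * h₀ * star u')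
          = v * (X * (B * (star X * (h₀ * star u')))) := by
        rw [hB]
        simp only [mul_assoc, cancelv1, cancelv2]
      rw [e1, Matrix.trace_mul_comm]
      congr 1
      simp only [mul_assoc, cancelv1, hv1, mul_one]
    rw [t1, t2, t3]
    rw [hM, mul_add, Matrix.trace_add]
    ring
  -- now integrate
  calc (∫ V : ∀ k, Matrix.unitaryGroup (Fin (n k)) ℂ,
        Matrix.trace
          ((v * Matrix.blockDiagonal'
              (fun k => (V k : Matrix (Fin (n k)) (Fin (n k)) ℂ)) * star v) * ρ *
            star (v * Matrix.blockDiagonal'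
              (fun k => (V k : Matrix (Fin (n k)) (Fin (n k)) ℂ)) * star v) * H') ∂μ)
      = ∫ V : ∀ k, Matrix.unitaryGroup (Fin (n k)) ℂ,
          (Matrix.trace (bdu V * B * star (bdu V) * M)
            + Matrix.trace (ρ * (v * h' * star v))) ∂μ := by
        exact integral_congr_ae (Filter.Eventually.of_forall key)
    _ = (∫ V : ∀ k, Matrix.unitaryGroup (Fin (n k)) ℂ,
          Matrix.trace (bdu V * B * star (bdu V) * M) ∂μ)
        + Matrix.trace (ρ * (v * h' * star v)) := by
        rw [integral_add _ (integrable_const _)]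
        · rw [integral_const]
          simp
        · apply Continuous.integrable_of_hasCompactSupport
          · exact (((continuous_bdu.matrix_mul continuous_const).matrix_mul
              continuous_bdu.matrix_conjTranspose).matrix_mul continuous_const).matrix_trace
          · exact HasCompactSupport.of_compactSpace _
    _ = Matrix.trace (ρ * (v * h' * star v)) := by
        rw [integral_trace_bdu_conj_eq_zero μ B M hMdiag, zero_add]
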